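/- arXiv:2507.21281 — 2 statements merged into one kernel-verified Lean document; each statement's English description precedes it below -/
import Mathlib

section
/- Let $A_{22}$ be a real $p \times p$ matrix, $A_{21}$ a real $p \times (n-p)$ matrix, and $D_2$ a real $p \times h$ matrix. Let $x_1 : \mathbb{R} \to \mathbb{R}^{n-p}$ and $g : \mathbb{R} \to \mathbb{R}^{h}$ be continuous, let $x_2 : \mathbb{R} \to \mathbb{R}^{p}$ be differentiable with $\dot{x}_2(\theta) = A_{22} x_2(\theta) + A_{21} x_1(\theta) + D_2 g(\theta)$ for all $\theta$, and let $\tau : \mathbb{R} \to [0, \infty)$ be differentiable. Define the time-varying-delay predictor $\hat{x}_2(t) := e^{A_{22}\tau(t)} x_2(t-\tau(t)) + \int_{t-\tau(t)}^{t} e^{A_{22}(t-\theta)} A_{21} x_1(\theta)\, d\theta$. Then $\hat{x}_2$ is differentiable and for every $t$, $\dot{\hat{x}}_2(t) = A_{21} x_1(t) + A_{22} \hat{x}_2(t) + (1 - \dot{\tau}(t))\, e^{A_{22}\tau(t)} D_2\, g(t - \tau(t))$. -/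
open MeasureTheory Matrix

/-- `mulVec` as a continuous linear map, jointly in the matrix and the vector. -/
noncomputable def mulVecCLM (p : ℕ) :
    Matrix (Fin p) (Fin p) ℝ →L[ℝ] (Fin p → ℝ) →L[ℝ] (Fin p → ℝ) :=
  LinearMap.toContinuousLinearMap
    ((LinearMap.toContinuousLinearMap :
        ((Fin p → ℝ) →ₗ[ℝ] (Fin p → ℝ)) ≃ₗ[ℝ] ((Fin p → ℝ) →L[ℝ] (Fin p → ℝ))).toLinearMap.comp
      (Matrix.toLin' :
        Matrix (Fin p) (Fin p) ℝ ≃ₗ[ℝ] ((Fin p → ℝ) →ₗ[ℝ] (Fin p → ℝ))).toLinearMap)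

@[simp] lemma mulVecCLM_apply {p : ℕ} (M : Matrix (Fin p) (Fin p) ℝ) (v : Fin p → ℝ) :
    mulVecCLM p M v = M *ᵥ v := by
  simp [mulVecCLM, Matrix.toLin'_apply]

set_option maxHeartbeats 2000000 in
/-- **Dynamics of the time-varying-delay predictor.**
With `x₂` solving `ẋ₂(θ) = A₂₂ x₂(θ) + A₂₁ x₁(θ) + D₂ g(θ)` and `τ` a differentiable
delay, the predictor `x̂₂(t) = e^{A₂₂ τ(t)} x₂(t-τ(t)) + ∫_{t-τ(t)}^t e^{A₂₂(t-θ)} A₂₁ x₁(θ) dθ`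
is differentiable with
`ẋ̂₂(t) = A₂₁ x₁(t) + A₂₂ x̂₂(t) + (1 - τ̇(t)) e^{A₂₂ τ(t)} D₂ g(t - τ(t))`. -/
theorem predictor_dynamics {n p h : ℕ}
    (A22 : Matrix (Fin p) (Fin p) ℝ) (A21 : Matrix (Fin p) (Fin (n - p)) ℝ)
    (D2 : Matrix (Fin p) (Fin h) ℝ)
    (x1 : ℝ → Fin (n - p) → ℝ) (g : ℝ → Fin h → ℝ)
    (hx1 : Continuous x1) (hg : Continuous g)
    (x2 : ℝ → Fin p → ℝ)
    (hx2 : ∀ θ : ℝ, HasDerivAt x2 (A22 *ᵥ x2 θ + A21 *ᵥ x1 θ + D2 *ᵥ g θ) θ)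
    (τ τ' : ℝ → ℝ) (hτ : ∀ t, HasDerivAt τ (τ' t) t) (hτ0 : ∀ t, 0 ≤ τ t) :
    ∀ t : ℝ, HasDerivAt
      (fun r => NormedSpace.exp (τ r • A22) *ᵥ x2 (r - τ r)
        + ∫ θ in (r - τ r)..r, NormedSpace.exp ((r - θ) • A22) *ᵥ (A21 *ᵥ x1 θ))
      (A21 *ᵥ x1 t
        + A22 *ᵥ (NormedSpace.exp (τ t • A22) *ᵥ x2 (t - τ t)
            + ∫ θ in (t - τ t)..t, NormedSpace.exp ((t - θ) • A22) *ᵥ (A21 *ᵥ x1 θ))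
        + (1 - τ' t) • (NormedSpace.exp (τ t • A22) *ᵥ (D2 *ᵥ g (t - τ t)))) t := by
  intro t
  -- basic facts about the matrix exponential (with the plain `Pi` topology)
  have hexp_add : ∀ r s : ℝ,
      NormedSpace.exp (r • A22) * NormedSpace.exp (s • A22)
        = NormedSpace.exp ((r + s) • A22) := by
    intro r s
    rw [add_smul]
    exact (Matrix.exp_add_of_commute _ _
      (((Commute.refl A22).smul_left r).smul_right s)).symm
  have hexp_commA : ∀ r : ℝ,
      NormedSpace.exp (r • A22) * A22 = A22 * NormedSpace.exp (r • A22) := by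
    intro r
    exact (((Commute.refl A22).smul_left r).exp_left)
  -- derivative of `r ↦ mulVecCLM p (exp (r • A22))`
  have hexpD : ∀ s : ℝ, HasDerivAt (fun r : ℝ => mulVecCLM p (NormedSpace.exp (r • A22)))
      (mulVecCLM p (NormedSpace.exp (s • A22) * A22)) s := by
    intro s
    letI : NormedRing (Matrix (Fin p) (Fin p) ℝ) := Matrix.linftyOpNormedRing
    letI : NormedAlgebra ℝ (Matrix (Fin p) (Fin p) ℝ) := Matrix.linftyOpNormedAlgebra
    exact (mulVecCLM p).hasFDerivAt.comp_hasDerivAt s (hasDerivAt_exp_smul_const A22 s)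
  have hLexp_cont : Continuous fun r : ℝ => mulVecCLM p (NormedSpace.exp (r • A22)) :=
    continuous_iff_continuousAt.2 fun s => (hexpD s).continuousAt
  -- the auxiliary integrand
  set w : ℝ → Fin p → ℝ :=
    fun θ => NormedSpace.exp ((-θ) • A22) *ᵥ (A21 *ᵥ x1 θ) with hw_def
  have hw_cont : Continuous w := by
    have h1 : Continuous fun θ : ℝ => mulVecCLM p (NormedSpace.exp ((-θ) • A22)) :=
      hLexp_cont.comp continuous_neg
    have h2 : Continuous fun θ : ℝ => A21 *ᵥ x1 θ :=
      (Matrix.mulVecLin A21).toContinuousLinearMap.continuous.comp hx1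
    exact (h1.clm_apply h2).congr fun θ => by rw [mulVecCLM_apply]
  have hw_int : ∀ a b : ℝ, IntervalIntegrable w volume a b := fun a b =>
    hw_cont.intervalIntegrable a b
  -- antiderivative of w
  have hWD : ∀ s : ℝ, HasDerivAt (fun r : ℝ => ∫ θ in (0:ℝ)..r, w θ) (w s) s := fun s =>
    intervalIntegral.integral_hasDerivAt_right (hw_int 0 s)
      (hw_cont.stronglyMeasurableAtFilter _ _) hw_cont.continuousAt
  -- the rewritten predictor
  set G : ℝ → Fin p → ℝ := fun r =>
    NormedSpace.exp ((-(r - τ r)) • A22) *ᵥ x2 (r - τ r)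
      + ((∫ θ in (0:ℝ)..r, w θ) - ∫ θ in (0:ℝ)..(r - τ r), w θ) with hG_def
  have hEτ : ∀ r : ℝ, NormedSpace.exp (r • A22) * NormedSpace.exp ((-(r - τ r)) • A22)
      = NormedSpace.exp (τ r • A22) := by
    intro r; rw [hexp_add, show r + -(r - τ r) = τ r by ring]
  have hE1 : NormedSpace.exp (t • A22) * NormedSpace.exp ((-t) • A22) = 1 := by
    rw [hexp_add, show t + -t = 0 by ring, zero_smul, NormedSpace.exp_zero]
  have hint : ∀ r : ℝ,
      (∫ θ in (r - τ r)..r, NormedSpace.exp ((r - θ) • A22) *ᵥ (A21 *ᵥ x1 θ))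
        = mulVecCLM p (NormedSpace.exp (r • A22)) (∫ θ in (r - τ r)..r, w θ) := by
    intro r
    rw [← (mulVecCLM p (NormedSpace.exp (r • A22))).intervalIntegral_comp_comm (hw_int _ _)]
    refine intervalIntegral.integral_congr fun θ _ => ?_
    rw [mulVecCLM_apply]
    show _ = NormedSpace.exp (r • A22)
      *ᵥ (NormedSpace.exp ((-θ) • A22) *ᵥ (A21 *ᵥ x1 θ))
    conv_rhs => rw [Matrix.mulVec_mulVec, hexp_add]
    rw [sub_eq_add_neg]
  -- the original function agrees with `fun r => mulVecCLM p (exp (r • A22)) (G r)`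
  have hfun : ∀ r : ℝ,
      NormedSpace.exp (τ r • A22) *ᵥ x2 (r - τ r)
        + (∫ θ in (r - τ r)..r, NormedSpace.exp ((r - θ) • A22) *ᵥ (A21 *ᵥ x1 θ))
        = mulVecCLM p (NormedSpace.exp (r • A22)) (G r) := by
    intro r
    have hsub : (∫ θ in (0:ℝ)..r, w θ) - ∫ θ in (0:ℝ)..(r - τ r), w θ
        = ∫ θ in (r - τ r)..r, w θ :=
      intervalIntegral.integral_interval_sub_left (hw_int 0 r) (hw_int 0 (r - τ r))
    show _ = mulVecCLM p (NormedSpace.exp (r • A22))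
        (NormedSpace.exp ((-(r - τ r)) • A22) *ᵥ x2 (r - τ r)
          + ((∫ θ in (0:ℝ)..r, w θ) - ∫ θ in (0:ℝ)..(r - τ r), w θ))
    rw [hsub, map_add, mulVecCLM_apply, Matrix.mulVec_mulVec, hEτ r, hint r]
  -- derivative of the first summand of G
  have hx2c : HasDerivAt
      (fun s : ℝ => mulVecCLM p (NormedSpace.exp ((-s) • A22)) (x2 s))
      (((-1 : ℝ) • mulVecCLM p (NormedSpace.exp ((-(t - τ t)) • A22) * A22)) (x2 (t - τ t))
        + mulVecCLM p (NormedSpace.exp ((-(t - τ t)) • A22))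
            (A22 *ᵥ x2 (t - τ t) + A21 *ᵥ x1 (t - τ t) + D2 *ᵥ g (t - τ t))) (t - τ t) := by
    have hc : HasDerivAt (fun s : ℝ => mulVecCLM p (NormedSpace.exp ((-s) • A22)))
        ((-1 : ℝ) • mulVecCLM p (NormedSpace.exp ((-(t - τ t)) • A22) * A22)) (t - τ t) :=
      (hexpD (-(t - τ t))).scomp (t - τ t) (hasDerivAt_neg (t - τ t))
    exact hc.clm_apply (hx2 (t - τ t))
  have hsubD : HasDerivAt (fun r : ℝ => r - τ r) (1 - τ' t) t :=
    (hasDerivAt_id t).sub (hτ t)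
  have hG1D : HasDerivAt
      (fun r : ℝ => mulVecCLM p (NormedSpace.exp ((-(r - τ r)) • A22)) (x2 (r - τ r)))
      ((1 - τ' t) •
        (((-1 : ℝ) • mulVecCLM p (NormedSpace.exp ((-(t - τ t)) • A22) * A22)) (x2 (t - τ t))
          + mulVecCLM p (NormedSpace.exp ((-(t - τ t)) • A22))
              (A22 *ᵥ x2 (t - τ t) + A21 *ᵥ x1 (t - τ t) + D2 *ᵥ g (t - τ t)))) t :=
    by have := hx2c.scomp t hsubD; exact this
  -- derivative of the second summand of G
  have hG2D : HasDerivAt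
      (fun r : ℝ => (∫ θ in (0:ℝ)..r, w θ) - ∫ θ in (0:ℝ)..(r - τ r), w θ)
      (w t - (1 - τ' t) • w (t - τ t)) t :=
    (hWD t).sub (by have := (hWD (t - τ t)).scomp t hsubD; exact this)
  have hGD : HasDerivAt G
      ((1 - τ' t) •
        (((-1 : ℝ) • mulVecCLM p (NormedSpace.exp ((-(t - τ t)) • A22) * A22)) (x2 (t - τ t))
          + mulVecCLM p (NormedSpace.exp ((-(t - τ t)) • A22))
              (A22 *ᵥ x2 (t - τ t) + A21 *ᵥ x1 (t - τ t) + D2 *ᵥ g (t - τ t)))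
        + (w t - (1 - τ' t) • w (t - τ t))) t := by
    have hLmv : ∀ (M : Matrix (Fin p) (Fin p) ℝ) (v : Fin p → ℝ), mulVecCLM p M v = M *ᵥ v :=
      fun M v => mulVecCLM_apply M v
    have := hG1D.add hG2D
    rw [hG_def]
    refine this.congr_of_eventuallyEq (Filter.Eventually.of_forall fun r => ?_)
    simp only [Pi.add_apply, hLmv]
  -- derivative of the full function
  have key : HasDerivAt (fun r : ℝ => mulVecCLM p (NormedSpace.exp (r • A22)) (G r))
      (mulVecCLM p (NormedSpace.exp (t • A22) * A22) (G t)
        + mulVecCLM p (NormedSpace.exp (t • A22))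
          ((1 - τ' t) •
            (((-1 : ℝ) • mulVecCLM p (NormedSpace.exp ((-(t - τ t)) • A22) * A22))
                (x2 (t - τ t))
              + mulVecCLM p (NormedSpace.exp ((-(t - τ t)) • A22))
                  (A22 *ᵥ x2 (t - τ t) + A21 *ᵥ x1 (t - τ t) + D2 *ᵥ g (t - τ t)))
            + (w t - (1 - τ' t) • w (t - τ t)))) t :=
    (hexpD t).clm_apply hGD
  have hGt : NormedSpace.exp (t • A22) *ᵥ G t
      = NormedSpace.exp (τ t • A22) *ᵥ x2 (t - τ t)
        + ∫ θ in (t - τ t)..t, NormedSpace.exp ((t - θ) • A22) *ᵥ (A21 *ᵥ x1 θ) := by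
    have := hfun t
    rw [mulVecCLM_apply] at this
    exact this.symm
  have hfun' : (fun r => NormedSpace.exp (τ r • A22) *ᵥ x2 (r - τ r)
        + ∫ θ in (r - τ r)..r, NormedSpace.exp ((r - θ) • A22) *ᵥ (A21 *ᵥ x1 θ))
      = fun r : ℝ => mulVecCLM p (NormedSpace.exp (r • A22)) (G r) := funext hfun
  rw [hfun']
  convert key using 1
  -- now the algebra
  have hinner : ((-1 : ℝ) • mulVecCLM p (NormedSpace.exp ((-(t - τ t)) • A22) * A22))
        (x2 (t - τ t))
      + mulVecCLM p (NormedSpace.exp ((-(t - τ t)) • A22))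
          (A22 *ᵥ x2 (t - τ t) + A21 *ᵥ x1 (t - τ t) + D2 *ᵥ g (t - τ t))
      = NormedSpace.exp ((-(t - τ t)) • A22) *ᵥ (A21 *ᵥ x1 (t - τ t))
        + NormedSpace.exp ((-(t - τ t)) • A22) *ᵥ (D2 *ᵥ g (t - τ t)) := by
    simp only [ContinuousLinearMap.smul_apply, mulVecCLM_apply, Matrix.mulVec_add,
      ← Matrix.mulVec_mulVec, neg_one_smul]
    abel
  rw [hinner]
  have h1 : ∀ v : Fin p → ℝ, NormedSpace.exp (t • A22)
      *ᵥ (NormedSpace.exp ((-(t - τ t)) • A22) *ᵥ v)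
      = NormedSpace.exp (τ t • A22) *ᵥ v := fun v => by
    rw [Matrix.mulVec_mulVec, hEτ t]
  have h2 : ∀ v : Fin p → ℝ, NormedSpace.exp (t • A22)
      *ᵥ (NormedSpace.exp ((-t) • A22) *ᵥ v) = v := fun v => by
    rw [Matrix.mulVec_mulVec, hE1, Matrix.one_mulVec]
  simp only [mulVecCLM_apply, hw_def]
  rw [show NormedSpace.exp (t • A22) * A22 = A22 * NormedSpace.exp (t • A22) from
      hexp_commA t]
  rw [← Matrix.mulVec_mulVec, hGt]
  simp only [Matrix.mulVec_add, Matrix.mulVec_smul, Matrix.mulVec_sub, smul_add, smul_sub]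
  simp only [h1, h2]
  abel
end

section
/- Let $m \ge 1$, $\rho > \eta > 0$, $t_0 \in \mathbb{R}$, and define $\mathrm{sign} : \mathbb{R}^m \to \mathbb{R}^m$ componentwise with $\mathrm{sign}(0)=0$. Let $s : [t_0, \infty) \to \mathbb{R}^m$ be continuous and let $w : [t_0, \infty) \to \mathbb{R}^m$ satisfy $\|w(t)\|_2 \le \rho - \eta$ for all $t$. Suppose that at every $t \ge t_0$ with $s(t) \ne 0$, the function $s$ is differentiable at $t$ with $\dot{s}(t) = w(t) - \rho\, \mathrm{sign}(s(t))$. Then there exists $T \in [t_0,\ t_0 + \|s(t_0)\|_2/\eta]$ such that $s(T) = 0$; i.e., the sliding surface $s = 0$ is reached in finite time, within time at most $\|s(t_0)\|_2/\eta$. -/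
open Matrix

/-- The componentwise sign vector: `(sign s)ᵢ = 1, -1, 0` according to
`sᵢ > 0`, `sᵢ < 0`, `sᵢ = 0` (in particular `sign 0 = 0`). -/
noncomputable def signVec {m : ℕ} (s : EuclideanSpace ℝ (Fin m)) : EuclideanSpace ℝ (Fin m) :=
  WithLp.toLp 2 (fun i => Real.sign (s i))

lemma norm_le_inner_signVec {m : ℕ} (x : EuclideanSpace ℝ (Fin m)) :
    ‖x‖ ≤ inner ℝ x (signVec x) := by
  have hinner : (inner ℝ x (signVec x) : ℝ) = ∑ i, |x i| := by
    rw [PiLp.inner_apply]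
    refine Finset.sum_congr rfl fun i _ => ?_
    simp only [RCLike.inner_apply, starRingEnd_apply, star_trivial, signVec]
    rcases lt_trichotomy (x i) 0 with h | h | h
    · rw [Real.sign_of_neg h, abs_of_neg h]; ring
    · simp [h]
    · rw [Real.sign_of_pos h, abs_of_pos h]; ring
  rw [hinner, EuclideanSpace.norm_eq]
  have h1 : ∑ i, ‖x i‖ ^ 2 ≤ (∑ i, |x i|) ^ 2 := by
    simpa [Real.norm_eq_abs] using
      Finset.sum_sq_le_sq_sum_of_nonneg (s := Finset.univ) (f := fun i => |x i|)
        (fun i _ => abs_nonneg _)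
  calc Real.sqrt (∑ i, ‖x i‖ ^ 2) ≤ Real.sqrt ((∑ i, |x i|) ^ 2) := Real.sqrt_le_sqrt h1
    _ = ∑ i, |x i| := Real.sqrt_sq (Finset.sum_nonneg fun i _ => abs_nonneg _)

/-- **Finite-time reaching of the sliding surface.**
If `s` is continuous on `[t₀, ∞)`, the perturbation satisfies `‖w(t)‖ ≤ ρ - η`, and at every
`t ≥ t₀` with `s(t) ≠ 0` the sliding dynamics `ṡ(t) = w(t) - ρ sign(s(t))` hold, then the
surface `s = 0` is reached at some time `T ∈ [t₀, t₀ + ‖s(t₀)‖/η]`. -/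
theorem sliding_surface_reached {m : ℕ} (hm : 1 ≤ m)
    (ρ η : ℝ) (hη : 0 < η) (hρη : η < ρ) (t₀ : ℝ)
    (s w : ℝ → EuclideanSpace ℝ (Fin m))
    (hs : ContinuousOn s (Set.Ici t₀))
    (hw : ∀ t, t₀ ≤ t → ‖w t‖ ≤ ρ - η)
    (hdyn : ∀ t, t₀ ≤ t → s t ≠ 0 → HasDerivAt s (w t - ρ • signVec (s t)) t) :
    ∃ T ∈ Set.Icc t₀ (t₀ + ‖s t₀‖ / η), s T = 0 := by
  by_contra hcon
  push_neg at hcon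
  set t₁ : ℝ := t₀ + ‖s t₀‖ / η with ht₁
  have ht01 : t₀ ≤ t₁ := le_add_of_nonneg_right (div_nonneg (norm_nonneg _) hη.le)
  -- φ t = ‖s t‖, written via the inner product
  set φ : ℝ → ℝ := fun t => Real.sqrt (inner ℝ (s t) (s t)) with hφdef
  have hφeq : ∀ t, φ t = ‖s t‖ := by
    intro t
    show Real.sqrt (inner ℝ (s t) (s t)) = ‖s t‖
    rw [real_inner_self_eq_norm_mul_norm, Real.sqrt_mul_self (norm_nonneg _)]
  -- derivative bound at interior points
  have hderiv : ∀ t ∈ Set.Ioo t₀ t₁, ∃ d, HasDerivAt φ d t ∧ d ≤ -η := by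
    intro t ht
    have ht0 : t₀ ≤ t := ht.1.le
    have hst : s t ≠ 0 := hcon t ⟨ht0, ht.2.le⟩
    have hsnorm : (0:ℝ) < ‖s t‖ := norm_pos_iff.mpr hst
    have hds := hdyn t ht0 hst
    have hg : HasDerivAt (fun t => (inner ℝ (s t) (s t) : ℝ))
        (inner ℝ (s t) (w t - ρ • signVec (s t)) + inner ℝ (w t - ρ • signVec (s t)) (s t)) t :=
      hds.inner ℝ hds
    have hgx : (inner ℝ (s t) (s t) : ℝ) ≠ 0 := by
      rw [real_inner_self_eq_norm_mul_norm]
      positivity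
    refine ⟨_, hg.sqrt hgx, ?_⟩
    have hnum : (inner ℝ (s t) (w t - ρ • signVec (s t)) : ℝ)
        + inner ℝ (w t - ρ • signVec (s t)) (s t) ≤ -(2 * η * ‖s t‖) := by
      have hsym : (inner ℝ (w t - ρ • signVec (s t)) (s t) : ℝ)
          = inner ℝ (s t) (w t - ρ • signVec (s t)) := real_inner_comm _ _
      have h1 : (inner ℝ (s t) (w t) : ℝ) ≤ ‖s t‖ * (ρ - η) := by
        calc (inner ℝ (s t) (w t) : ℝ) ≤ ‖s t‖ * ‖w t‖ := real_inner_le_norm _ _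
          _ ≤ ‖s t‖ * (ρ - η) := by
            exact mul_le_mul_of_nonneg_left (hw t ht0) (norm_nonneg _)
      have h2 : ρ * ‖s t‖ ≤ ρ * inner ℝ (s t) (signVec (s t)) :=
        mul_le_mul_of_nonneg_left (norm_le_inner_signVec (s t)) (by linarith)
      have hexp : (inner ℝ (s t) (w t - ρ • signVec (s t)) : ℝ)
          = inner ℝ (s t) (w t) - ρ * inner ℝ (s t) (signVec (s t)) := by
        rw [inner_sub_right, real_inner_smul_right]
      rw [hsym, hexp]
      nlinarith [norm_nonneg (s t)]
    have hden : (0:ℝ) < 2 * Real.sqrt (inner ℝ (s t) (s t)) := by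
      have : Real.sqrt (inner ℝ (s t) (s t)) = ‖s t‖ := by
        rw [real_inner_self_eq_norm_mul_norm, Real.sqrt_mul_self (norm_nonneg _)]
      rw [this]; positivity
    rw [div_le_iff₀ hden]
    have : Real.sqrt (inner ℝ (s t) (s t)) = ‖s t‖ := by
      rw [real_inner_self_eq_norm_mul_norm, Real.sqrt_mul_self (norm_nonneg _)]
    rw [this]
    calc (inner ℝ (s t) (w t - ρ • signVec (s t)) : ℝ)
        + inner ℝ (w t - ρ • signVec (s t)) (s t) ≤ -(2 * η * ‖s t‖) := hnum
      _ = -η * (2 * ‖s t‖) := by ring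
  -- continuity of φ on [t₀, t₁]
  have hsub : Set.Icc t₀ t₁ ⊆ Set.Ici t₀ := Set.Icc_subset_Ici_self
  have hφcont : ContinuousOn φ (Set.Icc t₀ t₁) := by
    apply Real.continuous_sqrt.comp_continuousOn
    exact ContinuousOn.inner (hs.mono hsub) (hs.mono hsub)
  have hφdiff : DifferentiableOn ℝ φ (interior (Set.Icc t₀ t₁)) := by
    rw [interior_Icc]
    intro t ht
    obtain ⟨d, hd, _⟩ := hderiv t ht
    exact hd.differentiableAt.differentiableWithinAt
  have hφderiv : ∀ t ∈ interior (Set.Icc t₀ t₁), deriv φ t ≤ -η := by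
    rw [interior_Icc]
    intro t ht
    obtain ⟨d, hd, hdle⟩ := hderiv t ht
    rw [hd.deriv]; exact hdle
  have hMVT := (convex_Icc t₀ t₁).image_sub_le_mul_sub_of_deriv_le hφcont hφdiff hφderiv
    t₀ (Set.left_mem_Icc.mpr ht01) t₁ (Set.right_mem_Icc.mpr ht01) ht01
  -- conclude
  have hst₁ : s t₁ ≠ 0 := hcon t₁ (Set.right_mem_Icc.mpr ht01)
  have h1 : (0:ℝ) < ‖s t₁‖ := norm_pos_iff.mpr hst₁
  rw [hφeq, hφeq] at hMVT
  have ht₁sub : t₁ - t₀ = ‖s t₀‖ / η := by rw [ht₁]; ring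
  rw [ht₁sub] at hMVT
  have : -η * (‖s t₀‖ / η) = -‖s t₀‖ := by field_simp
  rw [this] at hMVT
  linarith
end
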